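/- Let a(t) = k₁·(3t + k₂)^(1/3) and φ(t) = ±√(2/3)·ln|3t + k₂| + k₃ with k₁ > 0, k₂, k₃ ∈ ℝ. Then on the interval where 3t + k₂ > 0, the pair (a, φ) satisfies the equations 6a·a'' + 3(a')² + (3/2)·a²·(φ')² = 0, a³·φ'' + 3a²·a'·φ' = 0, and the energy condition 3a·(a')² − a³·(φ')²/2 = 0. -/

import Mathlib

theorem stmt3 (k₁ k₂ k₃ s : ℝ) (hk₁ : 0 < k₁) (hs : s = 1 ∨ s = -1)
    (a φ : ℝ → ℝ)
    (ha : ∀ t : ℝ, a t = k₁ * (3 * t + k₂) ^ ((1:ℝ)/3))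
    (hφ : ∀ t : ℝ, φ t = s * Real.sqrt (2/3) * Real.log |3 * t + k₂| + k₃) :
    ∀ t : ℝ, 0 < 3 * t + k₂ →
      6 * a t * deriv (deriv a) t + 3 * (deriv a t) ^ 2
        + (3/2) * (a t) ^ 2 * (deriv φ t) ^ 2 = 0 ∧
      (a t) ^ 3 * deriv (deriv φ) t + 3 * (a t) ^ 2 * deriv a t * deriv φ t = 0 ∧
      3 * a t * (deriv a t) ^ 2 - (a t) ^ 3 * (deriv φ t) ^ 2 / 2 = 0 := by
  have hc2 : (s * Real.sqrt (2/3)) ^ 2 = 2/3 := by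
    rw [mul_pow, Real.sq_sqrt (by norm_num : (2:ℝ)/3 ≥ 0)]
    rcases hs with rfl | rfl <;> norm_num
  set c : ℝ := s * Real.sqrt (2/3) with hc
  have haf : a = fun y => k₁ * (3 * y + k₂) ^ ((1:ℝ)/3) := funext ha
  have hφf : φ = fun y => c * Real.log (3 * y + k₂) + k₃ := by
    funext y; rw [hφ, Real.log_abs]
  have hlin : ∀ x : ℝ, HasDerivAt (fun y : ℝ => 3 * y + k₂) 3 x := by
    intro x
    simpa using ((hasDerivAt_id x).const_mul 3).add_const k₂
  have hda : ∀ x : ℝ, 0 < 3 * x + k₂ →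
      HasDerivAt a (k₁ * (3 * x + k₂) ^ (-(2:ℝ)/3)) x := by
    intro x hx
    have h2 := ((hlin x).rpow_const (p := (1:ℝ)/3) (Or.inl (ne_of_gt hx))).const_mul k₁
    rw [haf]
    refine h2.congr_deriv ?_
    rw [show (1:ℝ)/3 - 1 = -(2:ℝ)/3 by norm_num]
    ring
  have hdφ : ∀ x : ℝ, 0 < 3 * x + k₂ →
      HasDerivAt φ (c * 3 * (3 * x + k₂)⁻¹) x := by
    intro x hx
    have h2 := (((hlin x).log (ne_of_gt hx)).const_mul c).add_const k₃
    rw [hφf]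
    refine h2.congr_deriv ?_
    ring
  intro t ht
  have hcont : Continuous fun x : ℝ => 3 * x + k₂ := by continuity
  have hmem : ∀ᶠ x in nhds t, 0 < 3 * x + k₂ :=
    (hcont.tendsto t).eventually (eventually_gt_nhds ht)
  -- first derivatives at t
  have hda_t : deriv a t = k₁ * (3 * t + k₂) ^ (-(2:ℝ)/3) := (hda t ht).deriv
  have hdφ_t : deriv φ t = c * 3 * (3 * t + k₂)⁻¹ := (hdφ t ht).deriv
  -- second derivatives
  have heva : deriv a =ᶠ[nhds t] fun x => k₁ * (3 * x + k₂) ^ (-(2:ℝ)/3) :=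
    hmem.mono fun x hx => (hda x hx).deriv
  have hevφ : deriv φ =ᶠ[nhds t] fun x => c * 3 * (3 * x + k₂)⁻¹ :=
    hmem.mono fun x hx => (hdφ x hx).deriv
  have hdda : HasDerivAt (fun x => k₁ * (3 * x + k₂) ^ (-(2:ℝ)/3))
      (k₁ * (-2 * (3 * t + k₂) ^ (-(5:ℝ)/3))) t := by
    have h2 := ((hlin t).rpow_const (p := -(2:ℝ)/3) (Or.inl (ne_of_gt ht))).const_mul k₁
    refine h2.congr_deriv ?_
    rw [show (-(2:ℝ)/3 - 1) = -(5:ℝ)/3 by norm_num]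
    ring
  have hddφ : HasDerivAt (fun x : ℝ => c * 3 * (3 * x + k₂)⁻¹)
      (c * 3 * (-3 / (3 * t + k₂) ^ 2)) t :=
    ((hlin t).inv (ne_of_gt ht)).const_mul (c * 3)
  have hdda_t : deriv (deriv a) t = k₁ * (-2 * (3 * t + k₂) ^ (-(5:ℝ)/3)) := by
    rw [heva.deriv_eq]; exact hdda.deriv
  have hddφ_t : deriv (deriv φ) t = c * 3 * (-3 / (3 * t + k₂) ^ 2) := by
    rw [hevφ.deriv_eq]; exact hddφ.deriv
  -- algebra
  set u : ℝ := 3 * t + k₂ with hu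
  set x : ℝ := u ^ ((1:ℝ)/3) with hxdef
  have hxpos : 0 < x := Real.rpow_pos_of_pos ht _
  have hx3 : x ^ 3 = u := by
    rw [hxdef, ← Real.rpow_natCast (u ^ ((1:ℝ)/3)) 3, ← Real.rpow_mul ht.le]
    norm_num
  have hm23 : u ^ (-(2:ℝ)/3) = 1 / x ^ 2 := by
    rw [show (-(2:ℝ)/3) = (1/3) * (-2) by norm_num, Real.rpow_mul ht.le, ← hxdef,
      show (-2:ℝ) = -((2:ℕ):ℝ) by norm_num, Real.rpow_neg hxpos.le,
      Real.rpow_natCast, one_div]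
  have hm53 : u ^ (-(5:ℝ)/3) = 1 / x ^ 5 := by
    rw [show (-(5:ℝ)/3) = (1/3) * (-5) by norm_num, Real.rpow_mul ht.le, ← hxdef,
      show (-5:ℝ) = -((5:ℕ):ℝ) by norm_num, Real.rpow_neg hxpos.le,
      Real.rpow_natCast, one_div]
  have hat : a t = k₁ * x := by rw [ha t]
  rw [hat, hda_t, hdφ_t, hdda_t, hddφ_t, hm23, hm53, ← hx3]
  have hxne : x ≠ 0 := ne_of_gt hxpos
  refine ⟨?_, ?_, ?_⟩
  · field_simp
    linear_combination (27 * k₁ ^ 2) * hc2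
  · field_simp
    ring
  · field_simp
    linear_combination (-9 * k₁ ^ 3) * hc2
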